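/- Let w₁, w₂, … be i.i.d. standard normal random variables and define x_k = x₀ ∏_{i=0}^{k−1}(1 − αᵢ + αᵢ w_{i+1}) with x₀ > 0 and deterministic step sizes αᵢ ∈ (0, 1/2]. Let y_k = (1/(k+1))∑_{j=0}^{k} x_j. Then for every k > 2 and every t > (k+1)/(x₀α₀α₁), E[exp(t y_k)] = +∞. In particular, y_k is not subgaussian (nor subexponential) for any finite k > 2. -/

import Mathlib

open MeasureTheory ProbabilityTheory Finset

open MeasureTheory ProbabilityTheory Finset Real Filter
open scoped ENNReal NNReal

lemma gauss_pdf_anti {u b : ℝ} (hu : 0 ≤ u) (hub : u ≤ b) :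
    gaussianPDFReal 0 1 b ≤ gaussianPDFReal 0 1 u := by
  unfold gaussianPDFReal
  simp only [NNReal.coe_one, mul_one, sub_zero]
  gcongr

lemma gauss_Icc_lb {u b : ℝ} (hu : 0 ≤ u) (hub : u ≤ b) :
    ENNReal.ofReal ((b - u) * gaussianPDFReal 0 1 b) ≤ gaussianReal 0 1 (Set.Icc u b) := by
  rw [gaussianReal_apply 0 one_ne_zero]
  have h1 : ENNReal.ofReal ((b - u) * gaussianPDFReal 0 1 b)
      = ENNReal.ofReal (gaussianPDFReal 0 1 b) * volume (Set.Icc u b) := by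
    rw [Real.volume_Icc, ← ENNReal.ofReal_mul (gaussianPDFReal_nonneg 0 1 b), mul_comm]
  rw [h1, ← setLIntegral_const]
  refine setLIntegral_mono (measurable_gaussianPDF 0 1) fun x hx => ?_
  exact ENNReal.ofReal_le_ofReal (gauss_pdf_anti (le_trans hu hx.1) hx.2)

lemma gauss_Ici_pos : 0 < gaussianReal 0 1 (Set.Ici (1:ℝ)) := by
  calc (0:ℝ≥0∞) < ENNReal.ofReal ((2 - 1) * gaussianPDFReal 0 1 2) := by
        simp only [ENNReal.ofReal_pos]
        nlinarith [gaussianPDFReal_pos 0 1 2 one_ne_zero]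
    _ ≤ gaussianReal 0 1 (Set.Icc (1:ℝ) 2) := gauss_Icc_lb (by norm_num) (by norm_num)
    _ ≤ gaussianReal 0 1 (Set.Ici (1:ℝ)) := measure_mono Set.Icc_subset_Ici_self

lemma prod_gauss_top {c : ℝ} (hc : 1 < c) :
    ∫⁻ p, (Set.Ici (1:ℝ) ×ˢ Set.Ici (1:ℝ)).indicator
        (fun p : ℝ × ℝ => ENNReal.ofReal (Real.exp (c * (p.1 * p.2)))) p
      ∂((gaussianReal 0 1).prod (gaussianReal 0 1)) = ⊤ := by
  set γ := gaussianReal 0 1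
  set F : ℝ × ℝ → ℝ≥0∞ := (Set.Ici (1:ℝ) ×ˢ Set.Ici (1:ℝ)).indicator
      (fun p : ℝ × ℝ => ENNReal.ofReal (Real.exp (c * (p.1 * p.2)))) with hF
  have hFmeas : Measurable F := by
    refine Measurable.indicator ?_ (measurableSet_Ici.prod measurableSet_Ici)
    fun_prop
  refine ENNReal.eq_top_of_forall_nnreal_le fun r => ?_
  -- tendsto of the lower bound sequence
  have hexp : Tendsto (fun n : ℕ => c * (n:ℝ)^2 - ((n:ℝ)+1)^2) atTop atTop := by
    refine tendsto_atTop_mono' atTop ?_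
      (tendsto_atTop_add_const_right _ (-3) tendsto_natCast_atTop_atTop)
    filter_upwards [eventually_ge_atTop ⌈3/(c-1)⌉₊] with n hn
    have hcn : 3/(c-1) ≤ (n:ℝ) := le_trans (Nat.le_ceil _) (by exact_mod_cast hn)
    have hc1 : (0:ℝ) < c - 1 := by linarith
    have h3 : (3:ℝ) ≤ (c-1) * n := by
      rw [div_le_iff₀ hc1] at hcn; linarith [hcn]
    have hn0 : (0:ℝ) ≤ (n:ℝ) := Nat.cast_nonneg n
    nlinarith [mul_le_mul_of_nonneg_right h3 hn0]
  have htend : Tendsto (fun n : ℕ => Real.exp (c*(n:ℝ)^2 - ((n:ℝ)+1)^2) / (2*π)) atTop atTop :=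
    (Real.tendsto_exp_atTop.comp hexp).atTop_div_const (by positivity)
  obtain ⟨n, hnr, hn1⟩ :=
    ((htend.eventually_ge_atTop (r:ℝ)).and (eventually_ge_atTop 1)).exists
  have hn1' : (1:ℝ) ≤ (n:ℝ) := by exact_mod_cast hn1
  -- the key real identity
  have hpdf : gaussianPDFReal 0 1 ((n:ℝ)+1)
      = (Real.sqrt (2*π))⁻¹ * Real.exp (-(((n:ℝ)+1)^2)/2) := by
    unfold gaussianPDFReal
    norm_num
  have hprod : gaussianPDFReal 0 1 ((n:ℝ)+1) * gaussianPDFReal 0 1 ((n:ℝ)+1)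
      = Real.exp (-(((n:ℝ)+1)^2)) / (2*π) := by
    have h2π : (0:ℝ) < 2*π := by positivity
    have hs : Real.sqrt (2*π) * Real.sqrt (2*π) = 2*π := Real.mul_self_sqrt h2π.le
    have he : Real.exp (-(((n:ℝ)+1)^2)/2) * Real.exp (-(((n:ℝ)+1)^2)/2)
        = Real.exp (-(((n:ℝ)+1)^2)) := by
      rw [← Real.exp_add]; ring_nf
    calc gaussianPDFReal 0 1 ((n:ℝ)+1) * gaussianPDFReal 0 1 ((n:ℝ)+1)
        = (Real.exp (-(((n:ℝ)+1)^2)/2) * Real.exp (-(((n:ℝ)+1)^2)/2))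
          * (Real.sqrt (2*π) * Real.sqrt (2*π))⁻¹ := by rw [hpdf]; ring
      _ = Real.exp (-(((n:ℝ)+1)^2)) / (2*π) := by rw [he, hs, div_eq_mul_inv]
  have key : Real.exp (c*(n:ℝ)^2 - ((n:ℝ)+1)^2) / (2*π)
      = Real.exp (c*(n:ℝ)^2) * (gaussianPDFReal 0 1 ((n:ℝ)+1) * gaussianPDFReal 0 1 ((n:ℝ)+1)) := by
    rw [hprod, show c*(n:ℝ)^2 - ((n:ℝ)+1)^2 = c*(n:ℝ)^2 + -(((n:ℝ)+1)^2) by ring,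
      Real.exp_add]
    ring
  calc (r : ℝ≥0∞) = ENNReal.ofReal (r:ℝ) := ENNReal.ofReal_coe_nnreal.symm
    _ ≤ ENNReal.ofReal (Real.exp (c*(n:ℝ)^2 - ((n:ℝ)+1)^2) / (2*π)) :=
        ENNReal.ofReal_le_ofReal hnr
    _ = ENNReal.ofReal (Real.exp (c*(n:ℝ)^2)) *
        (ENNReal.ofReal (gaussianPDFReal 0 1 ((n:ℝ)+1)) *
          ENNReal.ofReal (gaussianPDFReal 0 1 ((n:ℝ)+1))) := by
        rw [key, ENNReal.ofReal_mul (Real.exp_pos _).le,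
          ENNReal.ofReal_mul (gaussianPDFReal_nonneg _ _ _)]
    _ ≤ ENNReal.ofReal (Real.exp (c*(n:ℝ)^2)) *
        (γ (Set.Icc (n:ℝ) ((n:ℝ)+1)) * γ (Set.Icc (n:ℝ) ((n:ℝ)+1))) := by
        have hlb : ENNReal.ofReal (gaussianPDFReal 0 1 ((n:ℝ)+1))
            ≤ γ (Set.Icc (n:ℝ) ((n:ℝ)+1)) := by
          have := gauss_Icc_lb (u := (n:ℝ)) (b := (n:ℝ)+1) (by positivity) (by linarith)
          simpa using this
        gcongr
    _ = ENNReal.ofReal (Real.exp (c*(n:ℝ)^2)) *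
        (γ.prod γ) (Set.Icc (n:ℝ) ((n:ℝ)+1) ×ˢ Set.Icc (n:ℝ) ((n:ℝ)+1)) := by
        rw [Measure.prod_prod]
    _ = ∫⁻ _ in Set.Icc (n:ℝ) ((n:ℝ)+1) ×ˢ Set.Icc (n:ℝ) ((n:ℝ)+1),
          ENNReal.ofReal (Real.exp (c*(n:ℝ)^2)) ∂(γ.prod γ) :=
        (setLIntegral_const _ _).symm
    _ ≤ ∫⁻ p in Set.Icc (n:ℝ) ((n:ℝ)+1) ×ˢ Set.Icc (n:ℝ) ((n:ℝ)+1), F p ∂(γ.prod γ) := by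
        refine setLIntegral_mono hFmeas fun p hp => ?_
        have h1 : (n:ℝ) ≤ p.1 ∧ p.1 ≤ (n:ℝ)+1 := hp.1
        have h2 : (n:ℝ) ≤ p.2 ∧ p.2 ≤ (n:ℝ)+1 := hp.2
        have hmem : p ∈ Set.Ici (1:ℝ) ×ˢ Set.Ici (1:ℝ) :=
          ⟨le_trans hn1' h1.1, le_trans hn1' h2.1⟩
        rw [hF, Set.indicator_of_mem hmem]
        refine ENNReal.ofReal_le_ofReal (Real.exp_le_exp.2 ?_)
        have hmul : (n:ℝ) * (n:ℝ) ≤ p.1 * p.2 :=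
          mul_le_mul h1.1 h2.1 (by linarith) (by linarith)
        nlinarith [hmul, hc]
    _ ≤ ∫⁻ p, F p ∂(γ.prod γ) := setLIntegral_le_lintegral _ _

/-- For the multiplicative-noise recursion `x_{k+1} = (1 - αₖ + αₖ w_{k+1}) xₖ` driven by
i.i.d. standard normals, the Polyak–Ruppert average `y_k` has infinite MGF at every
`t > (k+1)/(x₀α₀α₁)`, for every `k > 2`. -/
theorem averaged_multiplicative_noise_heavy_tail {Ω : Type*} {m0 : MeasurableSpace Ω}
    {μ : Measure Ω} [IsProbabilityMeasure μ]
    (w : ℕ → Ω → ℝ)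
    (hw_meas : ∀ i, Measurable (w i))
    (hw_indep : iIndepFun (m := fun _ : ℕ => (inferInstance : MeasurableSpace ℝ)) w μ)
    (hw_gauss : ∀ i, Measure.map (w i) μ = gaussianReal 0 1)
    (x₀ : ℝ) (hx₀ : 0 < x₀)
    (a : ℕ → ℝ) (ha0 : ∀ i, 0 < a i) (ha1 : ∀ i, a i ≤ 1 / 2)
    (x : ℕ → Ω → ℝ)
    (hx : ∀ k ω, x k ω = x₀ * ∏ i ∈ Finset.range k, (1 - a i + a i * w (i + 1) ω))
    (y : ℕ → Ω → ℝ)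
    (hy : ∀ k ω, y k ω = (1 / ((k : ℝ) + 1)) * ∑ j ∈ Finset.range (k + 1), x j ω) :
    ∀ k : ℕ, 2 < k → ∀ t : ℝ, ((k : ℝ) + 1) / (x₀ * a 0 * a 1) < t →
      ∫⁻ ω, ENNReal.ofReal (Real.exp (t * y k ω)) ∂μ = ⊤ := by
  classical
  intro k hk t ht
  have hPpos : 0 < x₀ * a 0 * a 1 := mul_pos (mul_pos hx₀ (ha0 0)) (ha0 1)
  have hk1 : (0:ℝ) < (k:ℝ) + 1 := by positivity
  have htpos : 0 < t := lt_trans (div_pos hk1 hPpos) ht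
  set c := t * (x₀ * a 0 * a 1) / ((k:ℝ) + 1) with hcdef
  have hc1 : 1 < c := by
    rw [hcdef, lt_div_iff₀ hk1, one_mul]
    exact (div_lt_iff₀ hPpos).1 ht
  set B := ⋂ i ∈ Finset.Icc 3 k, w i ⁻¹' Set.Ici (1:ℝ) with hB
  have hBmeas : MeasurableSet B := by
    exact MeasurableSet.iInter fun i => MeasurableSet.iInter fun _ =>
      (hw_meas i) measurableSet_Ici
  have hmemB : ∀ ω, ω ∈ B ↔ ∀ i ∈ Finset.Icc 3 k, (1:ℝ) ≤ w i ω := by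
    intro ω; rw [hB]; simp [Set.mem_iInter]
  set F : ℝ × ℝ → ℝ≥0∞ := (Set.Ici (1:ℝ) ×ˢ Set.Ici (1:ℝ)).indicator
      (fun p : ℝ × ℝ => ENNReal.ofReal (Real.exp (c * (p.1 * p.2)))) with hF
  have hFmeas : Measurable F := by
    refine Measurable.indicator ?_ (measurableSet_Ici.prod measurableSet_Ici)
    fun_prop
  set f' : Ω → ℝ≥0∞ := fun ω => F (w 1 ω, w 2 ω) with hf'
  set g' : Ω → ℝ≥0∞ := B.indicator 1 with hg'
  have hf'meas : Measurable f' := hFmeas.comp ((hw_meas 1).prodMk (hw_meas 2))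
  have hg'meas : Measurable g' := measurable_one.indicator hBmeas
  -- pointwise bound
  have hpt : ∀ ω, f' ω * g' ω ≤ ENNReal.ofReal (Real.exp (t * y k ω)) := by
    intro ω
    by_cases hωB : ω ∈ B
    swap
    · simp [hg', Set.indicator_of_notMem hωB]
    by_cases hω12 : (w 1 ω, w 2 ω) ∈ Set.Ici (1:ℝ) ×ˢ Set.Ici (1:ℝ)
    swap
    · have hz : f' ω = 0 := by
        rw [hf', hF]; exact Set.indicator_of_notMem hω12 _
      rw [hz, zero_mul]; exact zero_le
    have h1 : (1:ℝ) ≤ w 1 ω := hω12.1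
    have h2 : (1:ℝ) ≤ w 2 ω := hω12.2
    have hall : ∀ i, 1 ≤ i → i ≤ k → 1 ≤ w i ω := by
      intro i h1i hik
      rcases Nat.lt_or_ge i 3 with hi3 | hi3
      · interval_cases i
        · exact h1
        · exact h2
      · exact (hmemB ω).1 hωB i (Finset.mem_Icc.2 ⟨hi3, hik⟩)
    have hfac : ∀ i, i < k → 1 ≤ 1 - a i + a i * w (i + 1) ω := by
      intro i hik
      have hwi := hall (i + 1) (by omega) (by omega)
      nlinarith [ha0 i]
    have hxnn : ∀ j, j ≤ k → 0 ≤ x j ω := by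
      intro j hj
      rw [hx]
      refine mul_nonneg hx₀.le (Finset.prod_nonneg fun i hi => ?_)
      have := hfac i (lt_of_lt_of_le (Finset.mem_range.1 hi) hj)
      linarith
    have hx2 : x₀ * a 0 * a 1 * (w 1 ω * w 2 ω) ≤ x 2 ω := by
      rw [hx]
      simp only [Finset.prod_range_succ, Finset.prod_range_zero, one_mul]
      have e0 : a 0 * w 1 ω ≤ 1 - a 0 + a 0 * w 1 ω := by linarith [ha1 0]
      have e1 : a 1 * w 2 ω ≤ 1 - a 1 + a 1 * w 2 ω := by linarith [ha1 1]
      have p0 : 0 ≤ a 0 * w 1 ω := mul_nonneg (ha0 0).le (by linarith)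
      have p1 : 0 ≤ a 1 * w 2 ω := mul_nonneg (ha0 1).le (by linarith)
      have hm := mul_le_mul e0 e1 p1 (le_trans p0 e0)
      nlinarith [hm, hx₀]
    have hy2 : c * (w 1 ω * w 2 ω) ≤ t * y k ω := by
      have hsum : x 2 ω ≤ ∑ j ∈ Finset.range (k + 1), x j ω :=
        Finset.single_le_sum (f := fun j => x j ω)
          (fun j hj => hxnn j (Nat.lt_succ_iff.1 (Finset.mem_range.1 hj)))
          (Finset.mem_range.2 (by omega))
      rw [hy]
      calc c * (w 1 ω * w 2 ω)
          = t * ((1 / ((k:ℝ) + 1)) * (x₀ * a 0 * a 1 * (w 1 ω * w 2 ω))) := by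
            rw [hcdef]; field_simp
        _ ≤ t * ((1 / ((k:ℝ) + 1)) * x 2 ω) := by
            have h1k : (0:ℝ) ≤ 1 / ((k:ℝ) + 1) := by positivity
            gcongr
        _ ≤ t * ((1 / ((k:ℝ) + 1)) * ∑ j ∈ Finset.range (k + 1), x j ω) := by
            have h1k : (0:ℝ) ≤ 1 / ((k:ℝ) + 1) := by positivity
            gcongr
    have hfω : f' ω = ENNReal.ofReal (Real.exp (c * (w 1 ω * w 2 ω))) := by
      rw [hf', hF]; exact Set.indicator_of_mem hω12 _
    rw [hfω, hg', Set.indicator_of_mem hωB, Pi.one_apply, mul_one]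
    exact ENNReal.ofReal_le_ofReal (Real.exp_le_exp.2 hy2)
  -- independence of f' and g'
  have hindep : IndepFun f' g' μ := by
    have hdisj : Disjoint ({1, 2} : Finset ℕ) (Finset.Icc 3 k) := by
      simp only [Finset.disjoint_left, Finset.mem_insert, Finset.mem_singleton, Finset.mem_Icc]
      rintro i (rfl | rfl) h <;> omega
    have base := hw_indep.indepFun_finset {1, 2} (Finset.Icc 3 k) hdisj hw_meas
    set φ : (({1, 2} : Finset ℕ) → ℝ) → ℝ≥0∞ :=
      fun v => F (v ⟨1, by simp⟩, v ⟨2, by simp⟩) with hφdef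
    set ψ : ((Finset.Icc 3 k : Finset ℕ) → ℝ) → ℝ≥0∞ :=
      fun v => Set.indicator {v | ∀ i, (1:ℝ) ≤ v i} 1 v with hψdef
    have hφ : Measurable φ :=
      hFmeas.comp ((measurable_pi_apply _).prodMk (measurable_pi_apply _))
    have hψ : Measurable ψ := by
      refine measurable_one.indicator ?_
      have : {v : ((Finset.Icc 3 k : Finset ℕ)) → ℝ | ∀ i, (1:ℝ) ≤ v i}
          = ⋂ i, (fun v : ((Finset.Icc 3 k : Finset ℕ)) → ℝ => v i) ⁻¹' Set.Ici 1 := by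
        ext v; simp [Set.mem_iInter]
      rw [this]
      exact MeasurableSet.iInter fun i => (measurable_pi_apply i) measurableSet_Ici
    have hcomp := base.comp hφ hψ
    have hgeq : (fun ω => ψ (fun i : (Finset.Icc 3 k : Finset ℕ) => w i ω)) = g' := by
      funext ω
      by_cases h : ω ∈ B
      · have hmem : (fun i : (Finset.Icc 3 k : Finset ℕ) => w i ω)
            ∈ {v : ((Finset.Icc 3 k : Finset ℕ)) → ℝ | ∀ i, (1:ℝ) ≤ v i} :=
          fun i => (hmemB ω).1 h i i.2
        rw [hψdef, hg']
        simp only [Set.indicator_of_mem hmem, Set.indicator_of_mem h]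
        rfl
      · have hmem : (fun i : (Finset.Icc 3 k : Finset ℕ) => w i ω)
            ∉ {v : ((Finset.Icc 3 k : Finset ℕ)) → ℝ | ∀ i, (1:ℝ) ≤ v i} := by
          intro hmem
          exact h ((hmemB ω).2 fun i hi => hmem ⟨i, hi⟩)
        rw [hψdef, hg']
        simp only [Set.indicator_of_notMem hmem, Set.indicator_of_notMem h]
    have hfeq : (fun ω => φ (fun i : ({1, 2} : Finset ℕ) => w i ω)) = f' := rfl
    rw [← hfeq, ← hgeq]
    exact hcomp
  -- compute the two integrals
  have hfint : ∫⁻ ω, f' ω ∂μ = ⊤ := by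
    have hind12 : IndepFun (w 1) (w 2) μ := hw_indep.indepFun (by norm_num)
    have hmap : μ.map (fun ω => (w 1 ω, w 2 ω))
        = (gaussianReal 0 1).prod (gaussianReal 0 1) := by
      rw [(indepFun_iff_map_prod_eq_prod_map_map (hw_meas 1).aemeasurable
        (hw_meas 2).aemeasurable).1 hind12, hw_gauss 1, hw_gauss 2]
    have hlm := lintegral_map hFmeas ((hw_meas 1).prodMk (hw_meas 2)) (μ := μ)
    rw [hf', ← hlm, hmap, hF]
    exact prod_gauss_top hc1
  have hgint : ∫⁻ ω, g' ω ∂μ = μ B := by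
    rw [hg']; exact lintegral_indicator_one hBmeas
  have hμB : μ B ≠ 0 := by
    rw [hB, hw_indep.meas_biInter (fun i _ => ⟨Set.Ici 1, measurableSet_Ici, rfl⟩)]
    refine Finset.prod_ne_zero_iff.2 fun i _ => ?_
    rw [show μ (w i ⁻¹' Set.Ici 1) = (μ.map (w i)) (Set.Ici 1) from
      (Measure.map_apply (hw_meas i) measurableSet_Ici).symm, hw_gauss i]
    exact gauss_Ici_pos.ne'
  refine top_le_iff.1 ?_
  calc (⊤ : ℝ≥0∞) = (∫⁻ ω, f' ω ∂μ) * ∫⁻ ω, g' ω ∂μ := by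
        rw [hfint, hgint, ENNReal.top_mul hμB]
    _ = ∫⁻ ω, (f' * g') ω ∂μ :=
        (lintegral_mul_eq_lintegral_mul_lintegral_of_indepFun hf'meas hg'meas hindep).symm
    _ ≤ ∫⁻ ω, ENNReal.ofReal (Real.exp (t * y k ω)) ∂μ := lintegral_mono hpt
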